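/- Let 0 < r < 1 and let G be analytic on the open unit disk 𝔻 with G(0) = 0 and 1 + 2 Re G(z) > 0 for all z in the closed disk {|z| ≤ r}. Then (1/2π) ∫₀^{2π} [ r e^{iθ} G′(r e^{iθ}) / (1 + 2 Re G(r e^{iθ})) ] dθ = −(1/π) ∫_{|z|<r} [ |G′(z)|² / (1 + 2 Re G(z))² ] dm(z), where dm is Lebesgue measure on ℂ ≅ ℝ². In particular, the contour integral on the left-hand side is a nonpositive real number. -/

import Mathlib

open Complex MeasureTheory Set Metric Filter
open scoped Interval

noncomputable section

/-- Key Wirtinger-type pointwise derivative identity: for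
`g w = exp w * G'(exp w) / (1 + G(exp w) + conj G(exp w))`, the `dbar`-part
`I • dg(1) - dg(I)` equals `-2i |G'|² |exp w|² / (1 + 2Re G)²`. -/
lemma stmt2_hasFDerivAt (G : ℂ → ℂ) (hG : DifferentiableOn ℂ G (Metric.ball 0 1)) (w : ℂ)
    (hz : Complex.exp w ∈ Metric.ball (0:ℂ) 1)
    (hD : (1 : ℂ) + G (Complex.exp w) + (starRingEnd ℂ) (G (Complex.exp w)) ≠ 0) :
    ∃ L : ℂ →L[ℝ] ℂ,
      HasFDerivAt (fun u : ℂ => Complex.exp u *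
        (deriv G (Complex.exp u) *
          ((1 : ℂ) + G (Complex.exp u) + (starRingEnd ℂ) (G (Complex.exp u)))⁻¹)) L w ∧
      Complex.I • L 1 - L Complex.I =
        -2 * Complex.I * (deriv G (Complex.exp w) * (starRingEnd ℂ) (deriv G (Complex.exp w)))
          * (Complex.exp w * (starRingEnd ℂ) (Complex.exp w))
          * (((1 : ℂ) + G (Complex.exp w) + (starRingEnd ℂ) (G (Complex.exp w))) ^ 2)⁻¹ := by
  set z := Complex.exp w with hzdef
  have hmem : Metric.ball (0:ℂ) 1 ∈ nhds z := isOpen_ball.mem_nhds hz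
  have hGd : HasDerivAt G (deriv G z) z := ((hG.differentiableAt hmem)).hasDerivAt
  have hGa : AnalyticOnNhd ℂ G (Metric.ball 0 1) := hG.analyticOnNhd isOpen_ball
  have hda : HasDerivAt (deriv G) (deriv (deriv G) z) z :=
    ((hGa.deriv.differentiableOn.differentiableAt hmem)).hasDerivAt
  have h1 : HasFDerivAt Complex.exp
      (((1 : ℂ →L[ℂ] ℂ).smulRight z).restrictScalars ℝ) w :=
    (Complex.hasDerivAt_exp w).hasFDerivAt.restrictScalars ℝ
  have h2 : HasFDerivAt G (((1 : ℂ →L[ℂ] ℂ).smulRight (deriv G z)).restrictScalars ℝ) z :=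
    hGd.hasFDerivAt.restrictScalars ℝ
  have h2' : HasFDerivAt (deriv G)
      (((1 : ℂ →L[ℂ] ℂ).smulRight (deriv (deriv G) z)).restrictScalars ℝ) z :=
    hda.hasFDerivAt.restrictScalars ℝ
  have hconj : HasFDerivAt (fun u : ℂ => (starRingEnd ℂ) (G u))
      ((Complex.conjCLE.toContinuousLinearMap).comp
        (((1 : ℂ →L[ℂ] ℂ).smulRight (deriv G z)).restrictScalars ℝ)) z :=
    (Complex.conjCLE.toContinuousLinearMap.hasFDerivAt).comp z h2
  have hDf : HasFDerivAt (fun u : ℂ => (1 : ℂ) + G u + (starRingEnd ℂ) (G u))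
      ((((1 : ℂ →L[ℂ] ℂ).smulRight (deriv G z)).restrictScalars ℝ) +
        ((Complex.conjCLE.toContinuousLinearMap).comp
          (((1 : ℂ →L[ℂ] ℂ).smulRight (deriv G z)).restrictScalars ℝ))) z :=
    (h2.const_add 1).add hconj
  have hinv := (((hasDerivAt_inv hD).hasFDerivAt.restrictScalars ℝ).comp z hDf)
  have hf := (h2'.mul' hinv)
  have hfz := hf.comp w h1
  have hL := h1.mul' hfz
  refine ⟨_, hL, ?_⟩
  simp only [ContinuousLinearMap.add_apply, ContinuousLinearMap.coe_comp',
    Function.comp_apply, ContinuousLinearMap.coe_restrictScalars',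
    ContinuousLinearMap.smul_apply, ContinuousLinearMap.smulRight_apply,
    ContinuousLinearMap.one_apply, ContinuousLinearEquiv.coe_coe,
    Complex.conjCLE_apply, smul_eq_mul, map_mul, Complex.conj_I, map_one,
    ContinuousLinearMap.toSpanSingleton_apply, op_smul_eq_mul, Pi.mul_apply]
  field_simp
  ring

/-- The contour-integral expression for the correction term `𝒥(r)` is a
nonpositive real number and equals the (negative) area-integral expression. -/
theorem stmt_2 (r : ℝ) (hr0 : 0 < r) (hr1 : r < 1) (G : ℂ → ℂ)
    (hG : DifferentiableOn ℂ G (Metric.ball 0 1))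
    (hG0 : G 0 = 0)
    (hpos : ∀ z ∈ Metric.closedBall (0 : ℂ) r, 0 < 1 + 2 * (G z).re) :
    ∃ J : ℝ,
      (1 / (2 * Real.pi) : ℂ) * (∫ θ in (0 : ℝ)..(2 * Real.pi),
          (r : ℂ) * Complex.exp (θ * Complex.I) *
              deriv G ((r : ℂ) * Complex.exp (θ * Complex.I)) /
            ((1 + 2 * (G ((r : ℂ) * Complex.exp (θ * Complex.I))).re : ℝ) : ℂ)) = (J : ℂ) ∧
      J = -((1 / Real.pi) * ∫ z in Metric.ball (0 : ℂ) r,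
          ‖deriv G z‖ ^ 2 / (1 + 2 * (G z).re) ^ 2) ∧
      J ≤ 0 := by
  have hπ : (0:ℝ) < Real.pi := Real.pi_pos
  set b := Real.log r with hbdef
  have hb0 : b < 0 := Real.log_neg hr0 hr1
  set D : ℂ → ℂ := fun z => (1 : ℂ) + G z + (starRingEnd ℂ) (G z) with hDdef
  have hDcast : ∀ z : ℂ, D z = ((1 + 2 * (G z).re : ℝ) : ℂ) := by
    intro z
    simp only [hDdef]
    rw [add_assoc, Complex.add_conj]
    push_cast
    ring
  set S := Metric.closedBall (0:ℂ) r with hSdef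
  have hScpt : IsCompact S := by rw [hSdef]; exact isCompact_closedBall _ _
  have h0S : (0:ℂ) ∈ S := by simp [hSdef, hr0.le]
  have hSsub : S ⊆ Metric.ball (0:ℂ) 1 := by
    intro z hz
    rw [hSdef, Metric.mem_closedBall] at hz
    rw [Metric.mem_ball]
    simp only [dist_zero_right] at hz ⊢
    linarith
  have hDne : ∀ z ∈ S, D z ≠ 0 := by
    intro z hz
    rw [hDcast]
    exact_mod_cast (hpos z hz).ne'
  set f : ℂ → ℂ := fun z => deriv G z * (D z)⁻¹ with hfdef
  set g : ℂ → ℂ := fun w => Complex.exp w * f (Complex.exp w) with hgdef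
  set h : ℂ → ℝ := fun z => ‖deriv G z‖ ^ 2 / (1 + 2 * (G z).re) ^ 2 with hhdef
  set ψ : ℝ → ℝ → ℝ := fun x y =>
    Real.exp (2 * x) * h (Complex.exp (x + y * Complex.I)) with hψdef
  have hre : ∀ x y : ℝ, ((x:ℂ) + (y:ℂ) * Complex.I).re = x := by intro x y; simp
  have him : ∀ x y : ℝ, ((x:ℂ) + (y:ℂ) * Complex.I).im = y := by intro x y; simp
  have hexpS : ∀ w : ℂ, w.re ≤ b → Complex.exp w ∈ S := by
    intro w hw
    rw [hSdef, Metric.mem_closedBall, dist_zero_right, Complex.norm_exp]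
    calc Real.exp w.re ≤ Real.exp b := Real.exp_le_exp.2 hw
    _ = r := Real.exp_log hr0
  -- continuity facts
  have hGc : ContinuousOn G S := hG.continuousOn.mono hSsub
  have haC : ContinuousOn (deriv G) S :=
    ((hG.analyticOnNhd isOpen_ball).deriv).continuousOn.mono hSsub
  have hDS : ContinuousOn D S := by
    simp only [hDdef]
    exact (continuousOn_const.add hGc).add (continuous_conj.comp_continuousOn hGc)
  have hfS : ContinuousOn f S := by
    simp only [hfdef]
    exact haC.mul (hDS.inv₀ hDne)
  have hhS : ContinuousOn h S := by
    simp only [hhdef]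
    refine ContinuousOn.div (haC.norm.pow 2) ?_ ?_
    · exact (continuousOn_const.add
        (continuousOn_const.mul (Complex.continuous_re.comp_continuousOn hGc))).pow 2
    · intro z hz
      exact pow_ne_zero 2 (hpos z hz).ne'
  obtain ⟨Cf, hCf⟩ := hScpt.exists_bound_of_continuousOn hfS
  obtain ⟨Ch, hCh⟩ := hScpt.exists_bound_of_continuousOn hhS
  have hCh0 : 0 ≤ Ch := le_trans (norm_nonneg _) (hCh 0 h0S)
  have hhnn : ∀ z : ℂ, 0 ≤ h z := by
    intro z
    simp only [hhdef]
    positivity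
  -- the key pointwise derivative fact
  have key : ∀ w : ℂ, Complex.exp w ∈ S →
      HasFDerivAt g (fderiv ℝ g w) w ∧
      Complex.I • fderiv ℝ g w 1 - fderiv ℝ g w Complex.I
        = -2 * Complex.I * ((ψ w.re w.im : ℝ) : ℂ) := by
    intro w hw
    obtain ⟨L, hL, hLval⟩ := stmt2_hasFDerivAt G hG w (hSsub hw) (hDne _ hw)
    have hgL : HasFDerivAt g L w := hL
    have hfd : fderiv ℝ g w = L := hgL.fderiv
    rw [hfd]
    refine ⟨hgL, ?_⟩
    rw [hLval]
    have hP : (0:ℝ) < 1 + 2 * (G (Complex.exp w)).re := hpos _ hw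
    have hPne : ((1 + 2 * (G (Complex.exp w)).re : ℝ) : ℂ) ≠ 0 := by
      exact_mod_cast hP.ne'
    have e1 : deriv G (Complex.exp w) * (starRingEnd ℂ) (deriv G (Complex.exp w))
        = ((‖deriv G (Complex.exp w)‖ ^ 2 : ℝ) : ℂ) := by
      rw [Complex.mul_conj]
      norm_cast
      rw [Complex.normSq_eq_norm_sq]
    have e2 : Complex.exp w * (starRingEnd ℂ) (Complex.exp w)
        = ((Real.exp (2 * w.re) : ℝ) : ℂ) := by
      rw [Complex.mul_conj]
      norm_cast
      rw [Complex.normSq_eq_norm_sq, Complex.norm_exp, two_mul, Real.exp_add, sq]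
    have e3 : ((1 : ℂ) + G (Complex.exp w) + (starRingEnd ℂ) (G (Complex.exp w)))
        = ((1 + 2 * (G (Complex.exp w)).re : ℝ) : ℂ) := hDcast (Complex.exp w)
    rw [e1, e2, e3]
    simp only [hψdef, hhdef, Complex.re_add_im]
    push_cast
    field_simp
  -- boundary integral identification
  have hbnd : (∫ θ in (0:ℝ)..(2*Real.pi),
        (r : ℂ) * Complex.exp (θ * Complex.I) *
            deriv G ((r : ℂ) * Complex.exp (θ * Complex.I)) /
          ((1 + 2 * (G ((r : ℂ) * Complex.exp (θ * Complex.I))).re : ℝ) : ℂ))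
      = ∫ y in (-Real.pi)..Real.pi, g ((b:ℂ) + (y:ℂ) * Complex.I) := by
    have hper : Function.Periodic (fun θ : ℝ =>
        (r : ℂ) * Complex.exp (θ * Complex.I) *
            deriv G ((r : ℂ) * Complex.exp (θ * Complex.I)) /
          ((1 + 2 * (G ((r : ℂ) * Complex.exp (θ * Complex.I))).re : ℝ) : ℂ)) (2*Real.pi) := by
      intro θ
      have hxp : ((θ + 2*Real.pi : ℝ) : ℂ) * Complex.I
          = (θ:ℂ)*Complex.I + 2*(Real.pi:ℂ)*Complex.I := by
        push_cast; ring
      simp only [hxp, Complex.exp_add, Complex.exp_two_pi_mul_I, mul_one]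
    have h1 : (∫ θ in (0:ℝ)..(2*Real.pi),
        (r : ℂ) * Complex.exp (θ * Complex.I) *
            deriv G ((r : ℂ) * Complex.exp (θ * Complex.I)) /
          ((1 + 2 * (G ((r : ℂ) * Complex.exp (θ * Complex.I))).re : ℝ) : ℂ))
        = ∫ θ in (-Real.pi)..(-Real.pi + 2*Real.pi),
        (r : ℂ) * Complex.exp (θ * Complex.I) *
            deriv G ((r : ℂ) * Complex.exp (θ * Complex.I)) /
          ((1 + 2 * (G ((r : ℂ) * Complex.exp (θ * Complex.I))).re : ℝ) : ℂ) := by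
      have := hper.intervalIntegral_add_eq 0 (-Real.pi)
      simpa using this
    have h2 : -Real.pi + 2*Real.pi = Real.pi := by ring
    rw [h1, h2]
    apply intervalIntegral.integral_congr
    intro y _
    have hexpb : Complex.exp ((b:ℂ) + (y:ℂ) * Complex.I)
        = (r:ℂ) * Complex.exp ((y:ℂ) * Complex.I) := by
      rw [Complex.exp_add]
      congr 1
      rw [← Complex.ofReal_exp, hbdef, Real.exp_log hr0]
    simp only [hgdef, hfdef, hexpb, hDcast]
    rw [div_eq_mul_inv, mul_assoc]
  -- rectangle (Cauchy–Pompeiu / Stokes) identity for each large T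
  have rect : ∀ T : ℝ, -T ≤ b →
      Complex.I • (∫ y in (-Real.pi)..Real.pi, g ((b:ℂ) + (y:ℂ) * Complex.I)) -
        Complex.I • (∫ y in (-Real.pi)..Real.pi, g (((-T : ℝ):ℂ) + (y:ℂ) * Complex.I))
      = (-2*Complex.I) * ((∫ x in (-T)..b, ∫ y in (-Real.pi)..Real.pi, ψ x y : ℝ) : ℂ) := by
    intro T hT
    have hre1 : (((-T:ℝ):ℂ) + ((-Real.pi : ℝ):ℂ) * Complex.I).re = -T := hre _ _
    have him1 : (((-T:ℝ):ℂ) + ((-Real.pi : ℝ):ℂ) * Complex.I).im = -Real.pi := him _ _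
    have hre2 : (((b:ℝ):ℂ) + ((Real.pi : ℝ):ℂ) * Complex.I).re = b := hre _ _
    have him2 : (((b:ℝ):ℂ) + ((Real.pi : ℝ):ℂ) * Complex.I).im = Real.pi := him _ _
    have hsub : ([[(-T:ℝ), b]] ×ℂ [[(-Real.pi), Real.pi]]) ⊆ {w : ℂ | w.re ≤ b} := by
      intro w hw
      rw [mem_reProdIm] at hw
      have hw1 := hw.1
      rw [uIcc_of_le hT] at hw1
      exact hw1.2
    have hgc : ContinuousOn g {w : ℂ | w.re ≤ b} := by
      simp only [hgdef]
      refine (Complex.continuous_exp.continuousOn).mul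
        (hfS.comp Complex.continuous_exp.continuousOn ?_)
      intro w hw
      exact hexpS w hw
    have hΨc : ContinuousOn (fun w : ℂ =>
        (-2*Complex.I) * ((Real.exp (2*w.re) * h (Complex.exp w) : ℝ) : ℂ))
        {w : ℂ | w.re ≤ b} := by
      refine continuousOn_const.mul (Complex.continuous_ofReal.comp_continuousOn ?_)
      refine ContinuousOn.mul ?_ (hhS.comp Complex.continuous_exp.continuousOn ?_)
      · exact (Real.continuous_exp.comp (continuous_const.mul Complex.continuous_re)).continuousOn
      · intro w hw
        exact hexpS w hw
    have huIcc1 : [[(-T:ℝ), b]] = Icc (-T) b := uIcc_of_le hT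
    have huIcc2 : [[(-Real.pi), Real.pi]] = Icc (-Real.pi) Real.pi :=
      uIcc_of_le (by linarith)
    have hrect_closed : IsClosed ([[(-T:ℝ), b]] ×ℂ [[(-Real.pi), Real.pi]]) := by
      rw [huIcc1, huIcc2]
      exact isClosed_Icc.reProdIm isClosed_Icc
    have hrect_cpt : IsCompact ([[(-T:ℝ), b]] ×ℂ [[(-Real.pi), Real.pi]]) := by
      rw [huIcc1, huIcc2]
      exact isCompact_of_isClosed_isBounded (isClosed_Icc.reProdIm isClosed_Icc)
        (Bornology.IsBounded.reProdIm (isBounded_Icc (-T) b) (isBounded_Icc (-Real.pi) Real.pi))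
    have Hc : ContinuousOn g ([[(((-T:ℝ):ℂ) + ((-Real.pi : ℝ):ℂ) * Complex.I).re,
          (((b:ℝ):ℂ) + ((Real.pi : ℝ):ℂ) * Complex.I).re]] ×ℂ
          [[(((-T:ℝ):ℂ) + ((-Real.pi : ℝ):ℂ) * Complex.I).im,
          (((b:ℝ):ℂ) + ((Real.pi : ℝ):ℂ) * Complex.I).im]]) := by
      rw [hre1, hre2, him1, him2]
      exact hgc.mono hsub
    have Hd : ∀ x ∈ (Ioo (min (((-T:ℝ):ℂ) + ((-Real.pi : ℝ):ℂ) * Complex.I).re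
          ((((b:ℝ)):ℂ) + ((Real.pi : ℝ):ℂ) * Complex.I).re)
          (max (((-T:ℝ):ℂ) + ((-Real.pi : ℝ):ℂ) * Complex.I).re
          ((((b:ℝ)):ℂ) + ((Real.pi : ℝ):ℂ) * Complex.I).re)) ×ℂ
          (Ioo (min (((-T:ℝ):ℂ) + ((-Real.pi : ℝ):ℂ) * Complex.I).im
          ((((b:ℝ)):ℂ) + ((Real.pi : ℝ):ℂ) * Complex.I).im)
          (max (((-T:ℝ):ℂ) + ((-Real.pi : ℝ):ℂ) * Complex.I).im
          ((((b:ℝ)):ℂ) + ((Real.pi : ℝ):ℂ) * Complex.I).im)) \ (∅ : Set ℂ),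
        HasFDerivAt g (fderiv ℝ g x) x := by
      rw [hre1, hre2, him1, him2]
      rintro x ⟨hx, -⟩
      rw [mem_reProdIm] at hx
      have hxre : x.re ≤ b := by
        have hx2 := hx.1.2
        rw [max_eq_right hT] at hx2
        exact hx2.le
      exact (key x (hexpS x hxre)).1
    have Hi : IntegrableOn (fun z => Complex.I • fderiv ℝ g z 1 - fderiv ℝ g z Complex.I)
        ([[(((-T:ℝ):ℂ) + ((-Real.pi : ℝ):ℂ) * Complex.I).re,
          (((b:ℝ):ℂ) + ((Real.pi : ℝ):ℂ) * Complex.I).re]] ×ℂ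
          [[(((-T:ℝ):ℂ) + ((-Real.pi : ℝ):ℂ) * Complex.I).im,
          (((b:ℝ):ℂ) + ((Real.pi : ℝ):ℂ) * Complex.I).im]]) := by
      rw [hre1, hre2, him1, him2]
      have hint : IntegrableOn (fun w : ℂ =>
          (-2*Complex.I) * ((Real.exp (2*w.re) * h (Complex.exp w) : ℝ) : ℂ))
          ([[(-T:ℝ), b]] ×ℂ [[(-Real.pi), Real.pi]]) :=
        (hΨc.mono hsub).integrableOn_compact hrect_cpt
      refine hint.congr_fun ?_ hrect_closed.measurableSet
      intro w hw
      have hwre : w.re ≤ b := hsub hw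
      show (-2*Complex.I) * ((Real.exp (2*w.re) * h (Complex.exp w) : ℝ) : ℂ)
          = Complex.I • fderiv ℝ g w 1 - fderiv ℝ g w Complex.I
      rw [(key w (hexpS w hwre)).2]
      simp only [hψdef, Complex.re_add_im]
    have main := Complex.integral_boundary_rect_of_hasFDerivAt_real_off_countable g
      (fderiv ℝ g) (((-T:ℝ):ℂ) + ((-Real.pi : ℝ):ℂ) * Complex.I)
      (((b:ℝ):ℂ) + ((Real.pi : ℝ):ℂ) * Complex.I) ∅ countable_empty Hc Hd Hi
    rw [hre1, hre2, him1, him2] at main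
    have hexppi : ∀ x : ℝ, Complex.exp ((x:ℂ) + ((-Real.pi : ℝ):ℂ) * Complex.I)
        = Complex.exp ((x:ℂ) + ((Real.pi : ℝ):ℂ) * Complex.I) := by
      intro x
      rw [Complex.exp_add, Complex.exp_add]
      congr 1
      push_cast
      rw [neg_mul, Complex.exp_neg, Complex.exp_pi_mul_I]
      norm_num
    have hcanc : (∫ x in (-T)..b, g ((x:ℂ) + ((-Real.pi : ℝ):ℂ) * Complex.I))
        = ∫ x in (-T)..b, g ((x:ℂ) + ((Real.pi : ℝ):ℂ) * Complex.I) := by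
      apply intervalIntegral.integral_congr
      intro x _
      simp only [hgdef]
      rw [hexppi x]
    rw [hcanc, sub_self, zero_add] at main
    have hRHS : (∫ x in (-T)..b, ∫ y in (-Real.pi)..Real.pi,
          (Complex.I • fderiv ℝ g ((x:ℂ) + (y:ℂ) * Complex.I) 1 -
            fderiv ℝ g ((x:ℂ) + (y:ℂ) * Complex.I) Complex.I))
        = (-2*Complex.I) * ((∫ x in (-T)..b, ∫ y in (-Real.pi)..Real.pi, ψ x y : ℝ) : ℂ) := by
      have step1 : (∫ x in (-T)..b, ∫ y in (-Real.pi)..Real.pi,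
            (Complex.I • fderiv ℝ g ((x:ℂ) + (y:ℂ) * Complex.I) 1 -
              fderiv ℝ g ((x:ℂ) + (y:ℂ) * Complex.I) Complex.I))
          = ∫ x in (-T)..b, (-2*Complex.I) * ((∫ y in (-Real.pi)..Real.pi, ψ x y : ℝ) : ℂ) := by
        apply intervalIntegral.integral_congr
        intro x hx
        simp only []
        have hx' : x ≤ b := by
          rw [uIcc_of_le hT] at hx
          exact hx.2
        have inner : (∫ y in (-Real.pi)..Real.pi,
              (Complex.I • fderiv ℝ g ((x:ℂ) + (y:ℂ) * Complex.I) 1 -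
                fderiv ℝ g ((x:ℂ) + (y:ℂ) * Complex.I) Complex.I))
            = ∫ y in (-Real.pi)..Real.pi, (-2*Complex.I) * ((ψ x y : ℝ) : ℂ) := by
          apply intervalIntegral.integral_congr
          intro y _
          have hmem : Complex.exp ((x:ℂ) + (y:ℂ) * Complex.I) ∈ S := by
            apply hexpS
            rw [hre]
            exact hx'
          have hval := (key _ hmem).2
          rw [hre, him] at hval
          show Complex.I • fderiv ℝ g ((x:ℂ) + (y:ℂ) * Complex.I) 1 -
              fderiv ℝ g ((x:ℂ) + (y:ℂ) * Complex.I) Complex.I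
            = (-2*Complex.I) * ((ψ x y : ℝ) : ℂ)
          rw [hval]
        rw [inner, intervalIntegral.integral_const_mul, intervalIntegral.integral_ofReal]
      rw [step1, intervalIntegral.integral_const_mul, intervalIntegral.integral_ofReal]
    rw [hRHS] at main
    exact main
  -- integrability of the inner integral on `Iic b`
  set q : ℝ → ℝ := fun x => ∫ y in (-Real.pi)..Real.pi, ψ x y with hqdef
  have hq_eq : ∀ x : ℝ, q x = ∫ y in Ioc (-Real.pi) Real.pi, ψ x y := by
    intro x
    simp only [hqdef]
    exact intervalIntegral.integral_of_le (by linarith)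
  have hψ_cont : ContinuousOn (fun p : ℝ × ℝ => ψ p.1 p.2)
      (Iic b ×ˢ Ioc (-Real.pi) Real.pi) := by
    simp only [hψdef]
    refine ContinuousOn.mul ?_ ?_
    · exact (Real.continuous_exp.comp (continuous_const.mul continuous_fst)).continuousOn
    · refine hhS.comp (Complex.continuous_exp.comp ?_).continuousOn ?_
      · exact (Complex.continuous_ofReal.comp continuous_fst).add
          ((Complex.continuous_ofReal.comp continuous_snd).mul continuous_const)
      · intro p hp
        apply hexpS
        rw [hre]
        exact hp.1
  have hψ_bound : ∀ p : ℝ × ℝ, p ∈ Iic b ×ˢ Ioc (-Real.pi) Real.pi →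
      ‖ψ p.1 p.2‖ ≤ Ch * Real.exp p.1 := by
    rintro ⟨x, y⟩ ⟨hx, hy⟩
    have hmemx : x ≤ b := hx
    have hmem : Complex.exp ((x:ℂ) + (y:ℂ) * Complex.I) ∈ S := by
      apply hexpS; rw [hre]; exact hmemx
    have hs1 : ‖ψ x y‖ = Real.exp (2*x) * |h (Complex.exp ((x:ℂ) + (y:ℂ) * Complex.I))| := by
      simp only [hψdef]
      rw [Real.norm_eq_abs, abs_mul, abs_of_pos (Real.exp_pos _)]
    rw [hs1]
    have hs2 : |h (Complex.exp ((x:ℂ) + (y:ℂ) * Complex.I))| ≤ Ch := hCh _ hmem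
    have hs3 : Real.exp (2*x) ≤ Real.exp x := by
      apply Real.exp_le_exp.2
      linarith
    calc Real.exp (2*x) * |h (Complex.exp ((x:ℂ) + (y:ℂ) * Complex.I))|
        ≤ Real.exp x * Ch := mul_le_mul hs3 hs2 (abs_nonneg _) (Real.exp_pos _).le
    _ = Ch * Real.exp x := by ring
  have hprod_meas : MeasurableSet (Iic b ×ˢ Ioc (-Real.pi) Real.pi : Set (ℝ × ℝ)) :=
    measurableSet_Iic.prod measurableSet_Ioc
  have hψ_int : Integrable (fun p : ℝ × ℝ => ψ p.1 p.2)
      ((volume.restrict (Iic b)).prod (volume.restrict (Ioc (-Real.pi) Real.pi))) := by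
    rw [Measure.prod_restrict]
    have hdom : Integrable (fun p : ℝ × ℝ => (Ch * Real.exp p.1) * 1)
        ((volume.restrict (Iic b)).prod (volume.restrict (Ioc (-Real.pi) Real.pi))) :=
      Integrable.mul_prod ((integrableOn_exp_Iic b).const_mul Ch) (integrable_const 1)
    rw [Measure.prod_restrict] at hdom
    refine Integrable.mono' hdom ?_ ?_
    · exact hψ_cont.aestronglyMeasurable hprod_meas
    · rw [ae_restrict_iff' hprod_meas]
      filter_upwards with p hp
      simpa using hψ_bound p hp
  have hq_int : IntegrableOn q (Iic b) := by
    have hqq := hψ_int.integral_prod_left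
    refine hqq.congr ?_
    filter_upwards with x
    rw [hq_eq x]
  -- taking limits
  set R := ∫ y in (-Real.pi)..Real.pi, g ((b:ℂ) + (y:ℂ) * Complex.I) with hRdef
  set Φinf := ∫ x in Iic b, q x with hΦdef
  have hΦ_tendsto : Tendsto (fun T : ℝ => ∫ x in (-T)..b, q x) atTop (nhds Φinf) :=
    intervalIntegral_tendsto_integral_Iic b hq_int tendsto_neg_atTop_atBot
  have hL_tendsto : Tendsto (fun T : ℝ =>
      ∫ y in (-Real.pi)..Real.pi, g (((-T : ℝ):ℂ) + (y:ℂ) * Complex.I)) atTop (nhds 0) := by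
    apply squeeze_zero_norm'
    · filter_upwards [eventually_ge_atTop (-b)] with T hT
      have hb' : -T ≤ b := by linarith
      have hptw : ∀ y ∈ Ι (-Real.pi) Real.pi,
          ‖g (((-T : ℝ):ℂ) + (y:ℂ) * Complex.I)‖ ≤ Real.exp (-T) * Cf := by
        intro y _
        have hmem : Complex.exp (((-T : ℝ):ℂ) + (y:ℂ) * Complex.I) ∈ S := by
          apply hexpS; rw [hre]; exact hb'
        have hgn : ‖g (((-T : ℝ):ℂ) + (y:ℂ) * Complex.I)‖
            = ‖Complex.exp (((-T : ℝ):ℂ) + (y:ℂ) * Complex.I)‖ *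
              ‖f (Complex.exp (((-T : ℝ):ℂ) + (y:ℂ) * Complex.I))‖ := by
          simp only [hgdef]; exact norm_mul _ _
        rw [hgn]
        have hnorm : ‖Complex.exp (((-T : ℝ):ℂ) + (y:ℂ) * Complex.I)‖ = Real.exp (-T) := by
          rw [Complex.norm_exp, hre]
        rw [hnorm]
        exact mul_le_mul_of_nonneg_left (hCf _ hmem) (Real.exp_pos _).le
      calc ‖∫ y in (-Real.pi)..Real.pi, g (((-T : ℝ):ℂ) + (y:ℂ) * Complex.I)‖
          ≤ Real.exp (-T) * Cf * |Real.pi - (-Real.pi)| :=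
            intervalIntegral.norm_integral_le_of_norm_le_const hptw
      _ = Real.exp (-T) * Cf * (2*Real.pi) := by
            rw [abs_of_pos (by linarith)]; ring
    · have ht : Tendsto (fun T : ℝ => Real.exp (-T)) atTop (nhds 0) :=
        Real.tendsto_exp_atBot.comp tendsto_neg_atTop_atBot
      have := (ht.mul_const Cf).mul_const (2*Real.pi)
      simpa using this
  have hEq : ∀ᶠ T in (atTop : Filter ℝ),
      Complex.I • R - Complex.I • (∫ y in (-Real.pi)..Real.pi,
        g (((-T : ℝ):ℂ) + (y:ℂ) * Complex.I))
      = (-2*Complex.I) * ((∫ x in (-T)..b, q x : ℝ) : ℂ) := by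
    filter_upwards [eventually_ge_atTop (-b)] with T hT
    exact rect T (by linarith)
  have h1 : Tendsto (fun T : ℝ => Complex.I • R - Complex.I •
      (∫ y in (-Real.pi)..Real.pi, g (((-T : ℝ):ℂ) + (y:ℂ) * Complex.I))) atTop
      (nhds (Complex.I • R - Complex.I • 0)) :=
    tendsto_const_nhds.sub (hL_tendsto.const_smul Complex.I)
  have h2 : Tendsto (fun T : ℝ => (-2*Complex.I) * ((∫ x in (-T)..b, q x : ℝ) : ℂ)) atTop
      (nhds ((-2*Complex.I) * (Φinf : ℂ))) := by
    refine Tendsto.const_mul _ ?_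
    exact (Complex.continuous_ofReal.tendsto _).comp hΦ_tendsto
  have hlim : Complex.I • R - Complex.I • 0 = (-2*Complex.I) * (Φinf : ℂ) :=
    tendsto_nhds_unique (h1.congr' hEq) h2
  have hlim' : Complex.I * R = Complex.I * (-2 * (Φinf : ℂ)) := by
    rw [smul_eq_mul, smul_eq_mul, mul_zero, sub_zero] at hlim
    rw [hlim]; ring
  have hR : R = -2 * (Φinf : ℂ) := mul_left_cancel₀ Complex.I_ne_zero hlim'
  -- change of variables: Φinf equals the area integral over the disc
  have hCoV : Φinf = ∫ z in Metric.ball (0:ℂ) r, h z := by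
    set Q : ℝ → ℝ := fun ρ =>
      ∫ θ in Ioo (-Real.pi) Real.pi, ρ * h (Complex.polarCoord.symm (ρ, θ)) with hQdef
    have himg : Real.exp '' Iic b = Ioc 0 r := by
      ext ρ
      constructor
      · rintro ⟨x, hx, rfl⟩
        refine ⟨Real.exp_pos x, ?_⟩
        rw [← Real.exp_log hr0]
        exact Real.exp_le_exp.2 hx
      · rintro ⟨hρ0, hρr⟩
        refine ⟨Real.log ρ, ?_, Real.exp_log hρ0⟩
        rw [mem_Iic, hbdef]
        exact Real.log_le_log hρ0 hρr
    have hsymm_eq : ∀ (x θ : ℝ), Complex.polarCoord.symm (Real.exp x, θ)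
        = Complex.exp ((x:ℂ) + (θ:ℂ) * Complex.I) := by
      intro x θ
      rw [Complex.polarCoord_symm_apply]
      simp only [Complex.exp_add, Complex.exp_mul_I, ← Complex.ofReal_exp,
        Complex.ofReal_cos, Complex.ofReal_sin]
    have hsubst : Φinf = ∫ ρ in Ioc 0 r, Q ρ := by
      have hder : ∀ x ∈ Iic b, HasDerivWithinAt Real.exp (Real.exp x) (Iic b) x :=
        fun x _ => (Real.hasDerivAt_exp x).hasDerivWithinAt
      have hchg := integral_image_eq_integral_abs_deriv_smul measurableSet_Iic hder
        (Real.exp_injective.injOn) Q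
      rw [himg] at hchg
      rw [hΦdef, hchg]
      apply setIntegral_congr_fun measurableSet_Iic
      intro x _
      show q x = |Real.exp x| • Q (Real.exp x)
      rw [hq_eq x, integral_Ioc_eq_integral_Ioo, smul_eq_mul,
        abs_of_pos (Real.exp_pos x)]
      simp only [hQdef]
      rw [← MeasureTheory.integral_const_mul]
      apply setIntegral_congr_fun measurableSet_Ioo
      intro θ _
      simp only [hψdef, hsymm_eq x θ]
      rw [two_mul, Real.exp_add]
      ring
    have hM : MeasurableSet {p : ℝ × ℝ | |p.1| < r} :=
      (isOpen_lt (_root_.continuous_abs.comp continuous_fst) continuous_const).measurableSet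
    have hFint : IntegrableOn (fun p : ℝ × ℝ => p.1 * h (Complex.polarCoord.symm p))
        (Ioo (0:ℝ) r ×ˢ Ioo (-Real.pi) Real.pi) := by
      have hsub2 : (Ioo (0:ℝ) r ×ˢ Ioo (-Real.pi) Real.pi : Set (ℝ × ℝ))
          ⊆ Complex.polarCoord.symm.source := by
        rw [OpenPartialHomeomorph.symm_source, Complex.polarCoord_target]
        exact prod_mono Ioo_subset_Ioi_self Subset.rfl
      have hmaps : MapsTo (Complex.polarCoord.symm)
          (Ioo (0:ℝ) r ×ˢ Ioo (-Real.pi) Real.pi) S := by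
        rintro ⟨ρ, θ⟩ ⟨hρ, hθ⟩
        rw [hSdef, Metric.mem_closedBall, dist_zero_right,
          Complex.norm_polarCoord_symm, abs_of_pos hρ.1]
        exact hρ.2.le
      have hcontF : ContinuousOn (fun p : ℝ × ℝ => p.1 * h (Complex.polarCoord.symm p))
          (Ioo (0:ℝ) r ×ˢ Ioo (-Real.pi) Real.pi) :=
        continuous_fst.continuousOn.mul
          (hhS.comp (Complex.polarCoord.symm.continuousOn.mono hsub2) hmaps)
      have hmeas2 : MeasurableSet (Ioo (0:ℝ) r ×ˢ Ioo (-Real.pi) Real.pi : Set (ℝ × ℝ)) :=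
        measurableSet_Ioo.prod measurableSet_Ioo
      have hfin : volume (Ioo (0:ℝ) r ×ˢ Ioo (-Real.pi) Real.pi : Set (ℝ × ℝ)) < ⊤ :=
        Bornology.IsBounded.measure_lt_top ((isBounded_Ioo _ _).prod (isBounded_Ioo _ _))
      refine Integrable.mono' (g := fun _ => r * Ch)
        ((integrableOn_const_iff (C := r * Ch)).2 (Or.inr hfin)) ?_ ?_
      · exact hcontF.aestronglyMeasurable hmeas2
      · rw [ae_restrict_iff' hmeas2]
        filter_upwards with p hp
        have hmem := hmaps hp
        calc ‖p.1 * h (Complex.polarCoord.symm p)‖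
            = |p.1| * |h (Complex.polarCoord.symm p)| := abs_mul _ _
        _ ≤ r * Ch := by
            apply mul_le_mul ?_ (hCh _ hmem) (abs_nonneg _) hr0.le
            rw [abs_of_pos hp.1.1]
            exact hp.1.2.le
    have hpolar : (∫ z in Metric.ball (0:ℂ) r, h z) = ∫ ρ in Ioo (0:ℝ) r, Q ρ := by
      rw [← integral_indicator measurableSet_ball, ← Complex.integral_comp_polarCoord_symm]
      have hind : ∀ p : ℝ × ℝ,
          p.1 • (Metric.ball (0:ℂ) r).indicator h (Complex.polarCoord.symm p)
          = ({p : ℝ × ℝ | |p.1| < r}).indicator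
              (fun p : ℝ × ℝ => p.1 * h (Complex.polarCoord.symm p)) p := by
        intro p
        by_cases hp : |p.1| < r
        · have hmem : Complex.polarCoord.symm p ∈ Metric.ball (0:ℂ) r := by
            rw [Metric.mem_ball, dist_zero_right,
              Complex.norm_polarCoord_symm]
            exact hp
          have hp' : p ∈ {p : ℝ × ℝ | |p.1| < r} := hp
          rw [Set.indicator_of_mem hmem, Set.indicator_of_mem hp', smul_eq_mul]
        · have hmem : Complex.polarCoord.symm p ∉ Metric.ball (0:ℂ) r := by
            rw [Metric.mem_ball, dist_zero_right,
              Complex.norm_polarCoord_symm]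
            exact hp
          have hp' : p ∉ {p : ℝ × ℝ | |p.1| < r} := hp
          rw [Set.indicator_of_notMem hmem, Set.indicator_of_notMem hp', smul_zero]
      simp_rw [hind]
      rw [setIntegral_indicator hM]
      have hset : polarCoord.target ∩ {p : ℝ × ℝ | |p.1| < r}
          = Ioo (0:ℝ) r ×ˢ Ioo (-Real.pi) Real.pi := by
        rw [polarCoord_target]
        ext ⟨ρ, θ⟩
        simp only [mem_inter_iff, mem_prod, mem_Ioi, mem_Ioo, mem_setOf_eq]
        constructor
        · rintro ⟨⟨ha1, ha2⟩, ha3⟩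
          exact ⟨⟨ha1, by rwa [abs_of_pos ha1] at ha3⟩, ha2⟩
        · rintro ⟨⟨ha1, ha3⟩, ha2⟩
          exact ⟨⟨ha1, ha2⟩, by rwa [abs_of_pos ha1]⟩
      rw [hset]
      have hFint' : IntegrableOn (fun p : ℝ × ℝ => p.1 * h (Complex.polarCoord.symm p))
          (Ioo (0:ℝ) r ×ˢ Ioo (-Real.pi) Real.pi) (volume.prod volume) := by
        rwa [← Measure.volume_eq_prod]
      rw [Measure.volume_eq_prod, setIntegral_prod _ hFint']
    rw [hpolar, hsubst]
    exact integral_Ioc_eq_integral_Ioo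
  -- conclusion
  have hBnn : 0 ≤ Φinf := by
    rw [hCoV]
    exact setIntegral_nonneg measurableSet_ball (fun z _ => hhnn z)
  refine ⟨-((1/Real.pi) * Φinf), ?_, ?_, ?_⟩
  · rw [hbnd, hR]
    have hπc : (Real.pi : ℂ) ≠ 0 := by exact_mod_cast hπ.ne'
    push_cast
    field_simp
  · rw [hCoV]
  · have : 0 ≤ (1/Real.pi) * Φinf := mul_nonneg (by positivity) hBnn
    linarith

end
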